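/- Let E be a directed graph with E⁰ ≠ ∅ and no cycles, such that E is cofinal, every vertex of E can reach every singular vertex of E, and there is no sequence v₁, v₂, … of pairwise distinct vertices of E together with, for each i ∈ ℕ, two distinct paths αᵢ ≠ βᵢ satisfying s(αᵢ) = s(βᵢ) = vᵢ and r(αᵢ) = r(βᵢ) = vᵢ₊₁. Then exactly one of the following holds: (1) E has exactly one sink and no infinite paths; or (2) E has no sinks and E contains an infinite path e₁e₂… with s⁻¹(s(eᵢ)) = {eᵢ} for all i ∈ ℕ. -/

import Mathlib

/-- `IsPathFrom src rng l v w` means the finite list of edges `l` is a path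
from vertex `v` to vertex `w` in the directed graph with source map `src` and
range map `rng`.  The empty list is the trivial path at a vertex (so `v = w`). -/
def IsPathFrom {V E : Type*} (src rng : E → V) (l : List E) (v w : V) : Prop :=
  l.Chain' (fun e f => rng e = src f) ∧
  (∀ e ∈ l.head?, src e = v) ∧
  (∀ e ∈ l.getLast?, rng e = w) ∧
  (l = [] → v = w)

/-- `v ≥ w`: there is a path from `v` to `w`. -/
def Reaches {V E : Type*} (src rng : E → V) (v w : V) : Prop :=
  ∃ l : List E, IsPathFrom src rng l v w

/-- An infinite path `e₁e₂…` is a sequence of edges with `r(eᵢ) = s(eᵢ₊₁)`. -/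
def IsInfPath {V E : Type*} (src rng : E → V) (e : ℕ → E) : Prop :=
  ∀ i, rng (e i) = src (e (i + 1))

/-- A graph is cofinal if every vertex can reach some vertex on every infinite path. -/
def Cofinal {V E : Type*} (src rng : E → V) : Prop :=
  ∀ (v : V) (e : ℕ → E), IsInfPath src rng e → ∃ i, Reaches src rng v (src (e i))

/-- A sink is a vertex emitting no edges. -/
def IsSink {V E : Type*} (src : E → V) (v : V) : Prop := ∀ e, src e ≠ v

/-- A singular vertex is a sink or an infinite emitter. -/
def IsSingular {V E : Type*} (src : E → V) (v : V) : Prop :=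
  IsSink src v ∨ {e | src e = v}.Infinite

/-- The graph has no cycles: no nonempty path begins and ends at the same vertex. -/
def HasNoCycles {V E : Type*} (src rng : E → V) : Prop :=
  ∀ (v : V) (l : List E), l ≠ [] → ¬ IsPathFrom src rng l v v

section helpers
variable {V E : Type*} (src rng : E → V)

lemma pf_nil (v : V) : IsPathFrom src rng [] v v :=
  ⟨List.isChain_nil, by simp, by simp, fun _ => rfl⟩

lemma pf_cons_iff (f : E) (l : List E) (v w : V) :
    IsPathFrom src rng (f :: l) v w ↔ src f = v ∧ IsPathFrom src rng l (rng f) w := by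
  cases l with
  | nil => simp [IsPathFrom, List.Chain']
  | cons g l' => simp [IsPathFrom, List.Chain', List.isChain_cons_cons, and_assoc, eq_comm]; tauto

lemma pf_append {l l' : List E} {v w x : V} (h : IsPathFrom src rng l v w)
    (h' : IsPathFrom src rng l' w x) : IsPathFrom src rng (l ++ l') v x := by
  induction l generalizing v with
  | nil => have := h.2.2.2 rfl; subst this; simpa using h'
  | cons f t ih =>
      rw [pf_cons_iff] at h
      rw [List.cons_append, pf_cons_iff]
      exact ⟨h.1, ih h.2⟩

lemma pf_single (f : E) : IsPathFrom src rng [f] (src f) (rng f) :=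
  (pf_cons_iff src rng f [] _ _).mpr ⟨rfl, pf_nil src rng _⟩

lemma reaches_trans {v w x : V} (h : Reaches src rng v w) (h' : Reaches src rng w x) :
    Reaches src rng v x := ⟨h.choose ++ h'.choose, pf_append src rng h.choose_spec h'.choose_spec⟩

lemma reaches_of_infPath {e : ℕ → E} (he : IsInfPath src rng e) {i j : ℕ} (h : i ≤ j) :
    Reaches src rng (src (e i)) (src (e j)) := by
  induction j, h using Nat.le_induction with
  | base => exact ⟨[], pf_nil src rng _⟩
  | succ j hij ih =>
      refine reaches_trans src rng ih ⟨[e j], ?_⟩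
      have := pf_single src rng (e j)
      rwa [he j] at this

lemma exists_infPath_from (hns : ∀ u : V, ∃ f : E, src f = u) (v : V) :
    ∃ e : ℕ → E, IsInfPath src rng e ∧ src (e 0) = v := by
  choose g hg using hns
  refine ⟨fun n => Nat.rec (g v) (fun _ p => g (rng p)) n, fun i => ?_, hg v⟩
  exact (hg _).symm

end helpers
/-- dichotomy: a nonempty graph with no cycles that is cofinal, in which
every vertex reaches every singular vertex, and which contains no sequence of pairwise
distinct vertices consecutively joined by pairs of distinct paths, either has exactly
one sink and no infinite paths, or has no sinks and contains an infinite path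
`e₁e₂…` with `s⁻¹(s(eᵢ)) = {eᵢ}` for all `i` — and not both. -/
theorem sink_or_tail_dichotomy {V E : Type*} [Nonempty V] (src rng : E → V)
    (hnc : HasNoCycles src rng) (hcof : Cofinal src rng)
    (hreach : ∀ v w : V, IsSingular src w → Reaches src rng v w)
    (hnoseq : ¬ ∃ v : ℕ → V, Function.Injective v ∧
      ∀ i : ℕ, ∃ α β : List E, α ≠ β ∧
        IsPathFrom src rng α (v i) (v (i + 1)) ∧
        IsPathFrom src rng β (v i) (v (i + 1))) :
    Xor'
      ((∃! v : V, IsSink src v) ∧ ¬ ∃ e : ℕ → E, IsInfPath src rng e)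
      ((∀ v : V, ¬ IsSink src v) ∧ ∃ e : ℕ → E, IsInfPath src rng e ∧
        ∀ i : ℕ, {e' : E | src e' = src (e i)} = {e i}) := by
  by_cases hip : ∃ e : ℕ → E, IsInfPath src rng e
  · -- Case 2: there is an infinite path; prove the right disjunct.
    obtain ⟨e, he⟩ := hip
    -- no sinks
    have hns0 : ∀ v : V, ¬ IsSink src v := by
      intro v hv
      obtain ⟨i, l, hl⟩ := hcof v e he
      cases l with
      | nil =>
          have hve : v = src (e i) := hl.2.2.2 rfl
          exact hv (e i) hve.symm
      | cons f t => exact hv f (hl.2.1 f rfl)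
    have hns : ∀ u : V, ∃ f : E, src f = u := by
      intro u
      have := hns0 u
      simpa [IsSink, not_forall] using this
    -- claim: some vertex reaches no bifurcation
    have hcl : ∃ v : V, ∀ w, Reaches src rng v w → ∀ f g : E, src f = w → src g = w → f = g := by
      by_contra hcl
      push_neg at hcl
      have H : ∀ u : V, ∃ w : V, ∃ α β : List E, α ≠ β ∧
          IsPathFrom src rng α u w ∧ IsPathFrom src rng β u w := by
        intro u
        obtain ⟨w, ⟨l, hl⟩, f, g, hf, hg, hfg⟩ := hcl u
        obtain ⟨p, hp, hp0⟩ := exists_infPath_from src rng hns (rng f)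
        obtain ⟨i, m, hm⟩ := hcof (rng g) p hp
        obtain ⟨q, hq⟩ := reaches_of_infPath src rng hp (Nat.zero_le i)
        rw [hp0] at hq
        refine ⟨src (p i), l ++ f :: q, l ++ g :: m, ?_, ?_, ?_⟩
        · intro hc
          have := List.append_cancel_left hc
          simp only [List.cons.injEq] at this
          exact hfg this.1
        · exact pf_append src rng hl ((pf_cons_iff src rng f q _ _).mpr ⟨hf, hq⟩)
        · exact pf_append src rng hl ((pf_cons_iff src rng g m _ _).mpr ⟨hg, hm⟩)
      -- build the forbidden sequence
      set vs : ℕ → V := fun n => Nat.rec (Classical.arbitrary V)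
        (fun _ p => (H p).choose) n with hvs
      have hstep : ∀ n, ∃ α β : List E, α ≠ β ∧
          IsPathFrom src rng α (vs n) (vs (n + 1)) ∧
          IsPathFrom src rng β (vs n) (vs (n + 1)) := by
        intro n
        exact (H (vs n)).choose_spec
      have hN : ∀ n, ∃ l : List E, l ≠ [] ∧ IsPathFrom src rng l (vs n) (vs (n + 1)) := by
        intro n
        obtain ⟨α, β, hne, hα, hβ⟩ := hstep n
        rcases α with _ | ⟨a, α⟩
        · rcases β with _ | ⟨b, β⟩
          · exact absurd rfl hne
          · exact ⟨b :: β, by simp, hβ⟩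
        · exact ⟨a :: α, by simp, hα⟩
      have hNlt : ∀ n m, n < m → ∃ l : List E, l ≠ [] ∧ IsPathFrom src rng l (vs n) (vs m) := by
        intro n m hnm
        induction m, hnm using Nat.le_induction with
        | base => exact hN n
        | succ m hm ih =>
            obtain ⟨l, hl, hpf⟩ := ih
            obtain ⟨l', hl', hpf'⟩ := hN m
            exact ⟨l ++ l', by simp [hl], pf_append src rng hpf hpf'⟩
      have hinj : Function.Injective vs := by
        intro a b hab
        by_contra hne
        rcases lt_or_gt_of_ne hne with h | h
        · obtain ⟨l, hl, hpf⟩ := hNlt a b h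
          rw [hab] at hpf
          exact hnc _ l hl hpf
        · obtain ⟨l, hl, hpf⟩ := hNlt b a h
          rw [hab] at hpf
          exact hnc _ l hl hpf
      exact hnoseq ⟨vs, hinj, hstep⟩
    obtain ⟨v₀, hv₀⟩ := hcl
    obtain ⟨p, hp, hp0⟩ := exists_infPath_from src rng hns v₀
    refine Or.inr ⟨⟨hns0, p, hp, fun i => ?_⟩, fun hA => hA.2 ⟨e, he⟩⟩
    ext f
    simp only [Set.mem_setOf_eq, Set.mem_singleton_iff]
    constructor
    · intro hf
      have hr : Reaches src rng v₀ (src (p i)) := by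
        have := reaches_of_infPath src rng hp (Nat.zero_le i)
        rwa [hp0] at this
      exact hv₀ (src (p i)) hr f (p i) hf rfl
    · rintro rfl; rfl
  · -- Case 1: no infinite path; prove the left disjunct.
    refine Or.inl ⟨⟨?_, hip⟩, fun hB => hip ⟨hB.2.choose, hB.2.choose_spec.1⟩⟩
    -- existence of a sink
    have hex : ∃ v : V, IsSink src v := by
      by_contra h
      push_neg at h
      have hns : ∀ u : V, ∃ f : E, src f = u := by
        intro u
        have := h u
        simpa [IsSink, not_forall] using this
      obtain ⟨q, hq, _⟩ := exists_infPath_from src rng hns (Classical.arbitrary V)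
      exact hip ⟨q, hq⟩
    obtain ⟨w, hw⟩ := hex
    refine ⟨w, hw, ?_⟩
    intro y hy
    obtain ⟨l, hl⟩ := hreach y w (Or.inl hw)
    cases l with
    | nil => exact hl.2.2.2 rfl
    | cons f t => exact absurd (hl.2.1 f rfl) (hy f)
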